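/- Suppose each of Λ complexes C(X^(i), Z/2) (two-term, over F₂) is equipped with a pre-orientation, a cup product, and the integral ∫₁ sending each bit to 1, satisfying the integrated Λ-fold Leibniz rule: ∫₁ Σ_{j=1}^Λ x₁ ∪ ... ∪ δ(xⱼ) ∪ ... ∪ x_Λ = 0. Then on the Λ-fold tensor product complex C(X⃗, Z/2), the map Ψ(x⃗₁,...,x⃗_Λ) = ∫_Λ x⃗₁ ∪ ... ∪ x⃗_Λ on degree-1 cochains is a cohomology invariant: for cocycles z⃗ᵢ ∈ Z¹ and any a⃗ ∈ C⁰, Ψ(z⃗₁,...,z⃗_s + δ(a⃗),...,z⃗_Λ) = Ψ(z⃗₁,...,z⃗_Λ). -/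

import Mathlib

/-!  We model cochains of a two-term classical code complex `C⁰(X) → C¹(X)` over `F₂`
as `F₂`-valued functions on `X₀ ⊕ X₁` (degree 0 basis ⊕ degree 1 basis; degrees ≥ 2
vanish in a two-term complex), and cochains of the `Λ`-fold tensor product complex as
`F₂`-valued functions on `Π i, (X₀ i ⊕ X₁ i)` (whose elements of exactly `k` "right"
coordinates form the degree-`k` basis).  The tensor-product cup product
`(x₁⊗y₁) ∪ (x₂⊗y₂) = (x₁∪x₂)⊗(y₁∪y₂)` (signs are trivial over `F₂`) acts
coordinatewise via the basis-level classical cup product. -/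

/-- Basis-level cup product coefficient of a classical code with pre-orientation:
`a ∪ a = a`, `a ∪ x = x` for `x ∈ δ_out(a)`, `x ∪ a = x` for `x ∈ δ_in(a)`,
zero otherwise. -/
def ccup {A B : Type*} [DecidableEq A] [DecidableEq B]
    (δin δout : A → Finset B) : (A ⊕ B) → (A ⊕ B) → (A ⊕ B) → ZMod 2
  | Sum.inl a, Sum.inl a', u => if a = a' ∧ u = Sum.inl a then 1 else 0
  | Sum.inl a, Sum.inr x, u => if x ∈ δout a ∧ u = Sum.inr x then 1 else 0
  | Sum.inr x, Sum.inl a, u => if x ∈ δin a ∧ u = Sum.inr x then 1 else 0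
  | Sum.inr _, Sum.inr _, _ => 0

/-- Cup product on classical cochains. -/
def classCup {A B : Type*} [Fintype A] [Fintype B] [DecidableEq A] [DecidableEq B]
    (δin δout : A → Finset B) (f g : (A ⊕ B) → ZMod 2) : (A ⊕ B) → ZMod 2 :=
  fun u => ∑ v : A ⊕ B, ∑ w : A ⊕ B, f v * g w * ccup δin δout v w u

/-- Coboundary of the two-term classical complex (zero on degree 1). -/
def classDelta {A B : Type*} [Fintype A] [DecidableEq B]
    (δc : A → Finset B) (f : (A ⊕ B) → ZMod 2) : (A ⊕ B) → ZMod 2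
  | Sum.inl _ => 0
  | Sum.inr x => ∑ a ∈ Finset.univ.filter (fun a => x ∈ δc a), f (Sum.inl a)

/-- The 1-dimensional integral: sum over all bits. -/
def classInt {A B : Type*} [Fintype B] (f : (A ⊕ B) → ZMod 2) : ZMod 2 :=
  ∑ x : B, f (Sum.inr x)

/-- `Λ`-fold cup product `((a₁ ∪ a₂) ∪ ⋯) ∪ a_Λ` on a classical code, `Λ = m + 1`. -/
def classCupFold {A B : Type*} [Fintype A] [Fintype B] [DecidableEq A] [DecidableEq B]
    (δin δout : A → Finset B) {m : ℕ} (a : Fin (m + 1) → ((A ⊕ B) → ZMod 2)) :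
    (A ⊕ B) → ZMod 2 :=
  (List.ofFn fun j : Fin m => a j.succ).foldl (classCup δin δout) (a 0)

section Tensor

variable {n : ℕ} (X₀ X₁ : Fin (n + 1) → Type*)
variable [∀ i, Fintype (X₀ i)] [∀ i, Fintype (X₁ i)]
variable [∀ i, DecidableEq (X₀ i)] [∀ i, DecidableEq (X₁ i)]

/-- Cup product on the tensor product complex (coordinatewise; trivial signs over `F₂`). -/
def tensorCup (δin δout : ∀ i, X₀ i → Finset (X₁ i))
    (f g : (∀ i, X₀ i ⊕ X₁ i) → ZMod 2) : (∀ i, X₀ i ⊕ X₁ i) → ZMod 2 :=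
  fun u => ∑ v : ∀ i, X₀ i ⊕ X₁ i, ∑ w : ∀ i, X₀ i ⊕ X₁ i,
    f v * g w * ∏ i, ccup (δin i) (δout i) (v i) (w i) (u i)

/-- Differential of the tensor product complex (trivial signs over `F₂`). -/
def tensorDelta (δc : ∀ i, X₀ i → Finset (X₁ i))
    (f : (∀ i, X₀ i ⊕ X₁ i) → ZMod 2) : (∀ i, X₀ i ⊕ X₁ i) → ZMod 2 :=
  fun u => ∑ i : Fin (n + 1),
    (match u i with
     | Sum.inl _ => (0 : ZMod 2)
     | Sum.inr x => ∑ a ∈ Finset.univ.filter (fun a => x ∈ δc i a),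
         f (Function.update u i (Sum.inl a)))

/-- The `Λ`-dimensional integral on the tensor product complex: sum over the
top-degree basis (all coordinates bits). -/
def tensorInt (f : (∀ i, X₀ i ⊕ X₁ i) → ZMod 2) : ZMod 2 :=
  ∑ x : ∀ i, X₁ i, f (fun i => Sum.inr (x i))

/-- `Λ`-fold cup product on the tensor product complex, `Λ = n + 1`. -/
def tensorCupFold (δin δout : ∀ i, X₀ i → Finset (X₁ i))
    (z : Fin (n + 1) → ((∀ i, X₀ i ⊕ X₁ i) → ZMod 2)) :
    (∀ i, X₀ i ⊕ X₁ i) → ZMod 2 :=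
  (List.ofFn fun j : Fin n => z j.succ).foldl (tensorCup X₀ X₁ δin δout) (z 0)

/-- Degree of a basis point of the tensor product complex. -/
def ptDeg (u : ∀ i, X₀ i ⊕ X₁ i) : ℕ :=
  (Finset.univ.filter fun i => (u i).isRight).card

section Aux

variable (δc δin δout : ∀ i, X₀ i → Finset (X₁ i))

/-- Tensor cochains. -/
abbrev TCoch := (∀ i, X₀ i ⊕ X₁ i) → ZMod 2

lemma tcup_add_left (f f' g : TCoch X₀ X₁) :
    tensorCup X₀ X₁ δin δout (f + f') g
      = tensorCup X₀ X₁ δin δout f g + tensorCup X₀ X₁ δin δout f' g := by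
  funext u
  simp [tensorCup, add_mul, Finset.sum_add_distrib]

lemma tcup_add_right (f g g' : TCoch X₀ X₁) :
    tensorCup X₀ X₁ δin δout f (g + g')
      = tensorCup X₀ X₁ δin δout f g + tensorCup X₀ X₁ δin δout f g' := by
  funext u
  simp [tensorCup, mul_add, add_mul, Finset.sum_add_distrib]

lemma foldl_tcup_add (L : List (TCoch X₀ X₁)) (f f' : TCoch X₀ X₁) :
    L.foldl (tensorCup X₀ X₁ δin δout) (f + f')
      = L.foldl (tensorCup X₀ X₁ δin δout) f + L.foldl (tensorCup X₀ X₁ δin δout) f' := by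
  induction L generalizing f f' with
  | nil => rfl
  | cons x L ih => simp only [List.foldl_cons, tcup_add_left, ih]

lemma ofFn_update' {α : Type*} {m : ℕ} (v : Fin m → α) (t : Fin m) (x : α) :
    List.ofFn (Function.update v t x) = (List.ofFn v).set t x := by
  apply List.ext_getElem
  · simp
  · intro i h1 h2
    simp only [List.getElem_ofFn, List.getElem_set, List.getElem_ofFn]
    by_cases h : (t : ℕ) = i
    · have : (⟨i, by simpa using h1⟩ : Fin m) = t := by
        apply Fin.ext; simp [h]
      rw [if_pos h, this, Function.update_self]
    · have : (⟨i, by simpa using h1⟩ : Fin m) ≠ t := by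
        intro hc; exact h (by simpa using congrArg Fin.val hc.symm)
      rw [if_neg h, Function.update_of_ne this]

lemma tensorInt_add (f g : TCoch X₀ X₁) :
    tensorInt X₀ X₁ (f + g) = tensorInt X₀ X₁ f + tensorInt X₀ X₁ g := by
  simp [tensorInt, Finset.sum_add_distrib]

lemma cupFold_update_add (z : Fin (n+1) → TCoch X₀ X₁) (k : Fin (n+1))
    (x y : TCoch X₀ X₁) :
    tensorCupFold X₀ X₁ δin δout (Function.update z k (x + y))
      = tensorCupFold X₀ X₁ δin δout (Function.update z k x)
        + tensorCupFold X₀ X₁ δin δout (Function.update z k y) := by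
  induction k using Fin.cases with
  | zero =>
      have hl : ∀ w : TCoch X₀ X₁,
          (List.ofFn fun j : Fin n => Function.update z 0 w j.succ)
            = List.ofFn fun j : Fin n => z j.succ := fun w =>
        congrArg List.ofFn (funext fun j => Function.update_of_ne (Fin.succ_ne_zero j) _ _)
      simp only [tensorCupFold, hl, Function.update_self]
      exact foldl_tcup_add X₀ X₁ δin δout _ _ _
  | succ t =>
      have h0 : ∀ w : TCoch X₀ X₁, Function.update z t.succ w 0 = z 0 := fun w =>
        Function.update_of_ne (Fin.succ_ne_zero t).symm _ _
      have hl : ∀ w : TCoch X₀ X₁,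
          (List.ofFn fun j : Fin n => Function.update z t.succ w j.succ)
            = ((List.ofFn fun j : Fin n => z j.succ).set t w) := by
        intro w
        rw [← ofFn_update']
        refine congrArg List.ofFn (funext fun j => ?_)
        rcases eq_or_ne j t with rfl | hj
        · simp
        · rw [Function.update_of_ne (fun h => hj (Fin.succ_injective _ h)),
            Function.update_of_ne hj]
      have hset : ∀ w : TCoch X₀ X₁,
          ((List.ofFn fun j : Fin n => z j.succ).set t w)
            = (List.ofFn fun j : Fin n => z j.succ).take t
                ++ w :: (List.ofFn fun j : Fin n => z j.succ).drop (t+1) := fun w =>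
        List.set_eq_take_cons_drop _ (by simp)
      simp only [tensorCupFold, h0, hl, hset, List.foldl_append, List.foldl_cons]
      rw [tcup_add_right, foldl_tcup_add]

/-- The map `w ↦ ∫_Λ w₁ ∪ ⋯ ∪ w_Λ` as a multilinear map. -/
def Tml : MultilinearMap (ZMod 2) (fun _ : Fin (n+1) => TCoch X₀ X₁) (ZMod 2) where
  toFun w := tensorInt X₀ X₁ (tensorCupFold X₀ X₁ δin δout w)
  map_update_add' := by
    intro instD w k x y
    obtain rfl : instD = instDecidableEqFin (n+1) := Subsingleton.elim _ _
    rw [cupFold_update_add, tensorInt_add]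
  map_update_smul' := by
    intro instD w k c x
    obtain rfl : instD = instDecidableEqFin (n+1) := Subsingleton.elim _ _
    rcases (show c = 0 ∨ c = 1 by revert c; decide) with rfl | rfl
    · have h := cupFold_update_add X₀ X₁ δin δout w k 0 0
      rw [add_zero] at h
      have h2 := congrArg (tensorInt X₀ X₁) h
      rw [tensorInt_add] at h2
      have h0 : tensorInt X₀ X₁ (tensorCupFold X₀ X₁ δin δout (Function.update w k 0)) = 0 :=
        left_eq_add.mp h2
      simp only [zero_smul, h0, smul_eq_mul, zero_mul]
    · simp only [one_smul]

lemma Tml_apply (w : Fin (n+1) → TCoch X₀ X₁) :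
    Tml X₀ X₁ δin δout w = tensorInt X₀ X₁ (tensorCupFold X₀ X₁ δin δout w) := rfl

lemma tensorDelta_add (f g : TCoch X₀ X₁) :
    tensorDelta X₀ X₁ δc (f + g) = tensorDelta X₀ X₁ δc f + tensorDelta X₀ X₁ δc g := by
  funext u
  simp only [tensorDelta, Pi.add_apply, ← Finset.sum_add_distrib]
  refine Finset.sum_congr rfl fun i _ => ?_
  cases h : u i with
  | inl a => simp
  | inr x => simp [Finset.sum_add_distrib]

lemma tensorDelta_zero :
    tensorDelta X₀ X₁ δc (0 : TCoch X₀ X₁) = 0 := by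
  funext u
  simp only [tensorDelta, Pi.zero_apply]
  refine Finset.sum_eq_zero fun i _ => ?_
  cases h : u i <;> simp

lemma tensorDelta_smul (c : ZMod 2) (f : TCoch X₀ X₁) :
    tensorDelta X₀ X₁ δc (c • f) = c • tensorDelta X₀ X₁ δc f := by
  rcases (show c = 0 ∨ c = 1 by revert c; decide) with rfl | rfl
  · simp [tensorDelta_zero]
  · simp

lemma tensorDelta_sum {α : Type*} (s : Finset α) (F : α → TCoch X₀ X₁) :
    tensorDelta X₀ X₁ δc (∑ u ∈ s, F u) = ∑ u ∈ s, tensorDelta X₀ X₁ δc (F u) := by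
  induction s using Finset.cons_induction with
  | empty => simp [tensorDelta_zero]
  | cons a s ha ih => rw [Finset.sum_cons, Finset.sum_cons, tensorDelta_add, ih]

/-- Pure tensor cochain. -/
def tpr (f : ∀ i, (X₀ i ⊕ X₁ i) → ZMod 2) : TCoch X₀ X₁ := fun u => ∏ i, f i (u i)

lemma prod_point_update (f : ∀ i, (X₀ i ⊕ X₁ i) → ZMod 2) (u : ∀ i, X₀ i ⊕ X₁ i)
    (i : Fin (n+1)) (v : X₀ i ⊕ X₁ i) :
    ∏ k, f k (Function.update u i v k)
      = f i v * ∏ k ∈ Finset.univ.erase i, f k (u k) := by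
  have h : ∀ k, f k (Function.update u i v k)
      = Function.update (fun k => f k (u k)) i (f i v) k := by
    intro k
    rcases eq_or_ne k i with rfl | hk
    · simp
    · simp [Function.update_of_ne hk]
  rw [Finset.prod_congr rfl fun k _ => h k, Finset.prod_update_of_mem (Finset.mem_univ i),
    Finset.sdiff_singleton_eq_erase]

lemma prod_func_update (f : ∀ i, (X₀ i ⊕ X₁ i) → ZMod 2) (u : ∀ i, X₀ i ⊕ X₁ i)
    (i : Fin (n+1)) (d : (X₀ i ⊕ X₁ i) → ZMod 2) :
    tpr X₀ X₁ (Function.update f i d) u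
      = d (u i) * ∏ k ∈ Finset.univ.erase i, f k (u k) := by
  have h : ∀ k, Function.update f i d k (u k)
      = Function.update (fun k => f k (u k)) i (d (u i)) k := by
    intro k
    rcases eq_or_ne k i with rfl | hk
    · simp
    · simp [Function.update_of_ne hk]
  rw [tpr, Finset.prod_congr rfl fun k _ => h k,
    Finset.prod_update_of_mem (Finset.mem_univ i), Finset.sdiff_singleton_eq_erase]

lemma tcup_tprod (f g : ∀ i, (X₀ i ⊕ X₁ i) → ZMod 2) :
    tensorCup X₀ X₁ δin δout (tpr X₀ X₁ f) (tpr X₀ X₁ g)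
      = tpr X₀ X₁ (fun i => classCup (δin i) (δout i) (f i) (g i)) := by
  funext u
  simp only [tensorCup, tpr, classCup]
  simp only [Finset.prod_univ_sum, Fintype.piFinset_univ, ← Finset.prod_mul_distrib]

lemma tint_tprod (f : ∀ i, (X₀ i ⊕ X₁ i) → ZMod 2) :
    tensorInt X₀ X₁ (tpr X₀ X₁ f) = ∏ i, classInt (f i) := by
  simp only [tensorInt, tpr, classInt]
  simp only [Finset.prod_univ_sum, Fintype.piFinset_univ]

lemma tdelta_tprod (f : ∀ i, (X₀ i ⊕ X₁ i) → ZMod 2) :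
    tensorDelta X₀ X₁ δc (tpr X₀ X₁ f)
      = ∑ i, tpr X₀ X₁ (Function.update f i (classDelta (δc i) (f i))) := by
  funext u
  simp only [tensorDelta, Finset.sum_apply]
  refine Finset.sum_congr rfl fun i _ => ?_
  rw [prod_func_update]
  cases h : u i with
  | inl a => dsimp only; simp [classDelta]
  | inr x =>
      dsimp only
      simp only [classDelta, tpr, Finset.sum_mul]
      refine Finset.sum_congr rfl fun a _ => ?_
      rw [prod_point_update]

lemma foldl_tcup_tprod (L : List (∀ i, (X₀ i ⊕ X₁ i) → ZMod 2))
    (f : ∀ i, (X₀ i ⊕ X₁ i) → ZMod 2) :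
    (L.map (tpr X₀ X₁)).foldl (tensorCup X₀ X₁ δin δout) (tpr X₀ X₁ f)
      = tpr X₀ X₁
          (fun i => (L.map (fun g => g i)).foldl (classCup (δin i) (δout i)) (f i)) := by
  induction L generalizing f with
  | nil => rfl
  | cons x L ih => simp only [List.map_cons, List.foldl_cons, tcup_tprod, ih]

lemma cupFold_tprod (F : Fin (n+1) → ∀ i, (X₀ i ⊕ X₁ i) → ZMod 2) :
    tensorCupFold X₀ X₁ δin δout (fun j => tpr X₀ X₁ (F j))
      = tpr X₀ X₁ (fun i => classCupFold (δin i) (δout i) (fun j => F j i)) := by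
  have h1 : (List.ofFn fun j : Fin n => tpr X₀ X₁ (F j.succ))
      = (List.ofFn fun j : Fin n => F j.succ).map (tpr X₀ X₁) := by
    rw [List.map_ofFn]; rfl
  have h2 : ∀ i, List.foldl (classCup (δin i) (δout i)) (F 0 i)
      ((List.ofFn fun j : Fin n => F j.succ).map (fun g => g i))
      = classCupFold (δin i) (δout i) (fun j => F j i) := by
    intro i
    rw [List.map_ofFn]
    rfl
  simp only [tensorCupFold, h1, foldl_tcup_tprod, h2]

/-- Single-site point mass. -/
def pt1 {i : Fin (n+1)} (x : X₀ i ⊕ X₁ i) : (X₀ i ⊕ X₁ i) → ZMod 2 :=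
  fun y => if y = x then 1 else 0

/-- Point mass on the tensor basis. -/
def ept (u : ∀ i, X₀ i ⊕ X₁ i) : TCoch X₀ X₁ := fun p => if p = u then 1 else 0

lemma ept_eq_tprod (u : ∀ i, X₀ i ⊕ X₁ i) :
    ept X₀ X₁ u = tpr X₀ X₁ (fun i => pt1 X₀ X₁ (u i)) := by
  funext p
  simp only [ept, tpr, pt1, Finset.prod_boole]
  simp [funext_iff]

lemma cochain_eq_sum (f : TCoch X₀ X₁) :
    f = ∑ u : ∀ i, X₀ i ⊕ X₁ i, f u • ept X₀ X₁ u := by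
  funext p
  simp [ept, Finset.sum_apply, smul_eq_mul, mul_ite, Finset.sum_ite_eq]

lemma core
    (hLeib : ∀ i : Fin (n + 1), ∀ a : Fin (n + 1) → ((X₀ i ⊕ X₁ i) → ZMod 2),
      ∑ j : Fin (n + 1), classInt (classCupFold (δin i) (δout i)
        (Function.update a j (classDelta (δc i) (a j)))) = 0)
    (F : Fin (n+1) → ∀ i, (X₀ i ⊕ X₁ i) → ZMod 2) :
    ∑ j : Fin (n+1), Tml X₀ X₁ δin δout
        (Function.update (fun k => tpr X₀ X₁ (F k)) j
          (tensorDelta X₀ X₁ δc (tpr X₀ X₁ (F j))))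
      = 0 := by
  have hstep : ∀ j, Tml X₀ X₁ δin δout
      (Function.update (fun k => tpr X₀ X₁ (F k)) j
        (tensorDelta X₀ X₁ δc (tpr X₀ X₁ (F j))))
      = ∑ i, classInt (classCupFold (δin i) (δout i)
            (Function.update (fun j' => F j' i) j (classDelta (δc i) (F j i))))
          * ∏ k ∈ Finset.univ.erase i,
              classInt (classCupFold (δin k) (δout k) (fun j' => F j' k)) := by
    intro j
    rw [tdelta_tprod, MultilinearMap.map_update_sum]
    refine Finset.sum_congr rfl fun i _ => ?_
    have hupd : Function.update (fun k => tpr X₀ X₁ (F k)) j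
        (tpr X₀ X₁ (Function.update (F j) i (classDelta (δc i) (F j i))))
        = fun k => tpr X₀ X₁
            (Function.update F j (Function.update (F j) i (classDelta (δc i) (F j i))) k) := by
      funext k
      rcases eq_or_ne k j with rfl | hk
      · simp
      · simp [Function.update_of_ne hk]
    rw [hupd, Tml_apply, cupFold_tprod, tint_tprod]
    have hfun : ∀ k, classInt (classCupFold (δin k) (δout k)
        (fun j' => Function.update F j
          (Function.update (F j) i (classDelta (δc i) (F j i))) j' k))
        = Function.update
            (fun k => classInt (classCupFold (δin k) (δout k) (fun j' => F j' k))) i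
            (classInt (classCupFold (δin i) (δout i)
              (Function.update (fun j' => F j' i) j (classDelta (δc i) (F j i))))) k := by
      intro k
      rcases eq_or_ne k i with rfl | hk
      · rw [Function.update_self]
        refine congrArg (fun t => classInt (classCupFold (δin k) (δout k) t))
          (funext fun j' => ?_)
        rcases eq_or_ne j' j with rfl | hj
        · simp
        · simp [Function.update_of_ne hj]
      · rw [Function.update_of_ne hk]
        refine congrArg (fun t => classInt (classCupFold (δin k) (δout k) t))
          (funext fun j' => ?_)
        rcases eq_or_ne j' j with rfl | hj
        · simp [Function.update_of_ne hk]
        · simp [Function.update_of_ne hj]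
    rw [Finset.prod_congr rfl fun k _ => hfun k,
      Finset.prod_update_of_mem (Finset.mem_univ i), Finset.sdiff_singleton_eq_erase]
  rw [Finset.sum_congr rfl fun j _ => hstep j, Finset.sum_comm]
  refine Finset.sum_eq_zero fun i _ => ?_
  rw [← Finset.sum_mul, hLeib i (fun j' => F j' i), zero_mul]

lemma tensorLeib
    (hLeib : ∀ i : Fin (n + 1), ∀ a : Fin (n + 1) → ((X₀ i ⊕ X₁ i) → ZMod 2),
      ∑ j : Fin (n + 1), classInt (classCupFold (δin i) (δout i)
        (Function.update a j (classDelta (δc i) (a j)))) = 0)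
    (w : Fin (n+1) → TCoch X₀ X₁) :
    ∑ j : Fin (n+1), Tml X₀ X₁ δin δout
        (Function.update w j (tensorDelta X₀ X₁ δc (w j))) = 0 := by
  have hupd : ∀ j, Function.update w j (tensorDelta X₀ X₁ δc (w j))
      = fun k => ∑ u : ∀ i, X₀ i ⊕ X₁ i,
          (if k = j then (w j u) • tensorDelta X₀ X₁ δc (ept X₀ X₁ u)
           else (w k u) • ept X₀ X₁ u) := by
    intro j
    funext k
    rcases eq_or_ne k j with rfl | hk
    · simp only [Function.update_self, if_pos rfl]
      conv_lhs => rw [show w k = ∑ u : ∀ i, X₀ i ⊕ X₁ i, w k u • ept X₀ X₁ u from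
        cochain_eq_sum X₀ X₁ (w k)]
      rw [tensorDelta_sum]
      exact Finset.sum_congr rfl fun u _ => tensorDelta_smul X₀ X₁ δc _ _
    · simp only [Function.update_of_ne hk, if_neg hk]
      exact cochain_eq_sum X₀ X₁ (w k)
  have hmain : ∀ j, Tml X₀ X₁ δin δout
      (Function.update w j (tensorDelta X₀ X₁ δc (w j)))
      = ∑ r : Fin (n+1) → ∀ i, X₀ i ⊕ X₁ i, (∏ k, w k (r k)) •
          Tml X₀ X₁ δin δout (Function.update (fun k => ept X₀ X₁ (r k)) j
            (tensorDelta X₀ X₁ δc (ept X₀ X₁ (r j)))) := by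
    intro j
    rw [hupd j, MultilinearMap.map_sum]
    refine Finset.sum_congr rfl fun r _ => ?_
    have hthis : (fun k => if k = j then (w j (r k)) • tensorDelta X₀ X₁ δc (ept X₀ X₁ (r k))
          else (w k (r k)) • ept X₀ X₁ (r k))
        = fun k => (w k (r k)) • (Function.update (fun k' => ept X₀ X₁ (r k')) j
            (tensorDelta X₀ X₁ δc (ept X₀ X₁ (r j))) k) := by
      funext k
      rcases eq_or_ne k j with rfl | hk
      · simp
      · simp [Function.update_of_ne hk, if_neg hk]
    rw [show (fun k => (if k = j then (w j (r k)) • tensorDelta X₀ X₁ δc (ept X₀ X₁ (r k))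
          else (w k (r k)) • ept X₀ X₁ (r k))) = _ from hthis, MultilinearMap.map_smul_univ]
  rw [Finset.sum_congr rfl fun j _ => hmain j, Finset.sum_comm]
  refine Finset.sum_eq_zero fun r _ => ?_
  rw [← Finset.smul_sum]
  have hz : ∑ j : Fin (n+1), Tml X₀ X₁ δin δout
      (Function.update (fun k => ept X₀ X₁ (r k)) j
        (tensorDelta X₀ X₁ δc (ept X₀ X₁ (r j)))) = 0 := by
    simp only [ept_eq_tprod]
    exact core X₀ X₁ δc δin δout hLeib (fun k => fun i => pt1 X₀ X₁ (r k i))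
  rw [hz, smul_zero]

end Aux

/-- Suppose each of the `Λ = n+1` classical two-term complexes
`C(X⁽ⁱ⁾, F₂)` is equipped with a pre-orientation (a partition
`δ(a) = δ_in(a) ⊎ δ_out(a) ⊎ δ_free(a)`), the integral `∫₁` sending each bit to 1,
and satisfies the integrated `Λ`-fold Leibniz rule
`∫₁ Σⱼ x₁ ∪ … ∪ δ(xⱼ) ∪ … ∪ x_Λ = 0`.  Then on the `Λ`-fold tensor product complex,
`Ψ(x⃗₁,…,x⃗_Λ) = ∫_Λ x⃗₁ ∪ … ∪ x⃗_Λ` is a cohomology invariant on degree-1 cochains: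
for 1-cocycles `z⃗₁,…,z⃗_Λ` and any 0-cochain `a⃗`,
`Ψ(z⃗₁,…,z⃗_s + δ(a⃗),…,z⃗_Λ) = Ψ(z⃗₁,…,z⃗_Λ)`. -/
theorem stmt17
    (δc δin δout δfree : ∀ i, X₀ i → Finset (X₁ i))
    (hpart : ∀ i a, δc i a = δin i a ∪ δout i a ∪ δfree i a)
    (hd1 : ∀ i a, Disjoint (δin i a) (δout i a))
    (hd2 : ∀ i a, Disjoint (δin i a) (δfree i a))
    (hd3 : ∀ i a, Disjoint (δout i a) (δfree i a))
    (hLeib : ∀ i : Fin (n + 1), ∀ a : Fin (n + 1) → ((X₀ i ⊕ X₁ i) → ZMod 2),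
      ∑ j : Fin (n + 1), classInt (classCupFold (δin i) (δout i)
        (Function.update a j (classDelta (δc i) (a j)))) = 0)
    (z : Fin (n + 1) → ((∀ i, X₀ i ⊕ X₁ i) → ZMod 2))
    (hzdeg : ∀ j, ∀ u, z j u ≠ 0 → ptDeg X₀ X₁ u = 1)
    (hzcoc : ∀ j, tensorDelta X₀ X₁ δc (z j) = 0)
    (a : (∀ i, X₀ i ⊕ X₁ i) → ZMod 2)
    (hadeg : ∀ u, a u ≠ 0 → ptDeg X₀ X₁ u = 0)
    (s : Fin (n + 1)) :
    tensorInt X₀ X₁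
        (tensorCupFold X₀ X₁ δin δout
          (Function.update z s (z s + tensorDelta X₀ X₁ δc a)))
      = tensorInt X₀ X₁ (tensorCupFold X₀ X₁ δin δout z) := by
  have hadd := (Tml X₀ X₁ δin δout).map_update_add z s (z s) (tensorDelta X₀ X₁ δc a)
  have h0 : Tml X₀ X₁ δin δout (Function.update z s (tensorDelta X₀ X₁ δc a)) = 0 := by
    have hL := tensorLeib X₀ X₁ δc δin δout hLeib (Function.update z s a)
    rw [Fintype.sum_eq_single s (fun j hj => ?_)] at hL
    · rwa [Function.update_self, Function.update_idem] at hL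
    · rw [Function.update_of_ne hj, hzcoc j]
      exact MultilinearMap.map_update_zero _ _ _
  have := hadd
  rw [Function.update_eq_self] at this
  show Tml X₀ X₁ δin δout (Function.update z s (z s + tensorDelta X₀ X₁ δc a))
      = Tml X₀ X₁ δin δout z
  rw [hadd, Function.update_eq_self, h0, add_zero]

end Tensor
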